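/- Let α be a real quadratic number with minimal polynomial f ∈ ℤ[X], and let β ∈ ℚ_p with f(β) ≠ 0. Then the pair (α, β) satisfies (EK+): inf over nonzero integers q, r of max(|q|,|r|)·|qα−r|·|qβ−r|_p = 0. -/

import Mathlib

namespace Stmt7Aux


def pmul (t : ℤ) (u v : ℤ × ℤ) : ℤ × ℤ :=
  (u.1*v.1 - u.2*v.2, u.1*v.2 + u.2*v.1 + t*u.2*v.2)

def pr (t : ℤ) : ℕ → ℤ × ℤ
  | 0 => (1, 0)
  | n+1 => (-(pr t n).2, (pr t n).1 + t*(pr t n).2)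

@[simp] lemma pr_zero (t : ℤ) : pr t 0 = (1, 0) := rfl
lemma pr_succ (t : ℤ) (n : ℕ) :
    pr t (n+1) = (-(pr t n).2, (pr t n).1 + t*(pr t n).2) := rfl

lemma pr_add (t : ℤ) (m n : ℕ) : pr t (m + n) = pmul t (pr t m) (pr t n) := by
  induction n with
  | zero => simp [pmul]
  | succ n ih =>
      have : m + (n+1) = (m+n) + 1 := by ring
      rw [this, pr_succ, ih, pr_succ, pmul, pmul]
      refine Prod.ext ?_ ?_ <;> dsimp <;> ring

lemma pr_norm (t : ℤ) (n : ℕ) :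
    (pr t n).1^2 + t*(pr t n).1*(pr t n).2 + (pr t n).2^2 = 1 := by
  induction n with
  | zero => simp
  | succ n ih => rw [pr_succ]; dsimp; linear_combination ih

lemma upow {R : Type*} [CommRing R] (t : ℤ) (U : R) (hU : U*U = (t:ℤ)*U - 1) :
    ∀ n : ℕ, ((pr t n).1 : R) + ((pr t n).2 : R) * U = U ^ n := by
  intro n
  induction n with
  | zero => simp
  | succ n ih =>
      rw [pr_succ, pow_succ, ← ih]
      push_cast
      linear_combination (-((pr t n).2 : R)) * hU

lemma solve {R : Type*} [CommRing R] (t : ℤ) (w : ℕ → R)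
    (hw : ∀ n, w (n+2) = (t:ℤ) * w (n+1) - w n) :
    ∀ n, w n = ((pr t n).1 : R) * w 0 + ((pr t n).2 : R) * w 1 := by
  have key : ∀ n, (w n = ((pr t n).1 : R) * w 0 + ((pr t n).2 : R) * w 1) ∧
      (w (n+1) = ((pr t (n+1)).1 : R) * w 0 + ((pr t (n+1)).2 : R) * w 1) := by
    intro n
    induction n with
    | zero => constructor <;> simp [pr_succ]
    | succ n ih =>
        refine ⟨ih.2, ?_⟩
        have h2 := hw n
        rw [h2, ih.1, ih.2, pr_succ (n := n+1), pr_succ (n := n)]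
        push_cast
        ring
  exact fun n => (key n).1







lemma alg_cancel {R : Type*} [CommRing R] (t A1 A2 D1 D2 : R)
    (hnorm : A1^2 + t*A1*A2 + A2^2 = 1)
    (h1 : A1 = A1*D1 - A2*D2)
    (h2 : A2 = A1*D2 + A2*D1 + t*A2*D2) :
    D1 = 1 ∧ D2 = 0 := by
  constructor
  · linear_combination (-(A1 + t*A2))*h1 - A2*h2 - (D1-1)*hnorm
  · linear_combination A2*h1 - A1*h2 - D2*hnorm

lemma exists_d (t : ℤ) (q : ℕ) (hq : 2 ≤ q) :
    ∃ d : ℕ, 1 ≤ d ∧ (q:ℤ) ∣ ((pr t d).1 - 1) ∧ (q:ℤ) ∣ (pr t d).2 := by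
  haveI : NeZero q := ⟨by omega⟩
  suffices h : ∀ m n : ℕ, m < n →
      (((pr t m).1 : ZMod q) = ((pr t n).1 : ZMod q) ∧
       ((pr t m).2 : ZMod q) = ((pr t n).2 : ZMod q)) →
      ∃ d : ℕ, 1 ≤ d ∧ (q:ℤ) ∣ ((pr t d).1 - 1) ∧ (q:ℤ) ∣ (pr t d).2 by
    obtain ⟨m, n, hmn, hfeq⟩ := Finite.exists_ne_map_eq_of_infinite
      (fun n : ℕ => (((pr t n).1 : ZMod q), ((pr t n).2 : ZMod q)))
    have h1 := congrArg Prod.fst hfeq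
    have h2 := congrArg Prod.snd hfeq
    dsimp at h1 h2
    rcases lt_or_gt_of_ne hmn with hlt | hlt
    · exact h m n hlt ⟨h1, h2⟩
    · exact h n m hlt ⟨h1.symm, h2.symm⟩
  intro m n hmn ⟨h1, h2⟩
  set d := n - m with hd
  have hmd : m + d = n := by omega
  have hx : (pr t n).1 = (pr t m).1 * (pr t d).1 - (pr t m).2 * (pr t d).2 := by
    rw [← hmd, pr_add]; rfl
  have hy : (pr t n).2 = (pr t m).1 * (pr t d).2 + (pr t m).2 * (pr t d).1
      + t * (pr t m).2 * (pr t d).2 := by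
    rw [← hmd, pr_add]; rfl
  have hnorm : ((pr t m).1 : ZMod q)^2 + (t : ZMod q)*((pr t m).1 : ZMod q)*((pr t m).2 : ZMod q)
      + ((pr t m).2 : ZMod q)^2 = 1 := by
    have := pr_norm t m
    have := congrArg (fun z : ℤ => (z : ZMod q)) this
    push_cast at this
    exact this
  have hc1 : ((pr t m).1 : ZMod q) = ((pr t m).1 : ZMod q) * ((pr t d).1 : ZMod q)
      - ((pr t m).2 : ZMod q) * ((pr t d).2 : ZMod q) := by
    have h3 := congrArg (fun z : ℤ => (z : ZMod q)) hx
    push_cast at h3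
    rw [← h1] at h3
    exact h3
  have hc2 : ((pr t m).2 : ZMod q) = ((pr t m).1 : ZMod q) * ((pr t d).2 : ZMod q)
      + ((pr t m).2 : ZMod q) * ((pr t d).1 : ZMod q)
      + (t : ZMod q) * ((pr t m).2 : ZMod q) * ((pr t d).2 : ZMod q) := by
    have h3 := congrArg (fun z : ℤ => (z : ZMod q)) hy
    push_cast at h3
    rw [← h2] at h3
    exact h3
  obtain ⟨hD1, hD2⟩ := alg_cancel (t : ZMod q) _ _ _ _ hnorm hc1 hc2
  refine ⟨d, by omega, ?_, ?_⟩
  · rw [← ZMod.intCast_zmod_eq_zero_iff_dvd]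
    push_cast
    rw [hD1]; ring
  · rw [← ZMod.intCast_zmod_eq_zero_iff_dvd]
    push_cast
    rw [hD2]

lemma f2 (t : ℤ) (D : ℕ) (P ξ η : ℤ) (hx : (pr t D).1 = 1 + P*ξ) (hy : (pr t D).2 = P*η) :
    ∀ k : ℕ, ∃ A B : ℤ,
      (pr t (D*k)).1 = 1 + (k:ℤ)*P*ξ + P^2*A ∧ (pr t (D*k)).2 = (k:ℤ)*P*η + P^2*B := by
  intro k
  induction k with
  | zero => refine ⟨0, 0, ?_, ?_⟩ <;> simp [pr]
  | succ k ih =>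
      obtain ⟨A, B, hA, hB⟩ := ih
      refine ⟨A + (k:ℤ)*ξ^2 + P*A*ξ - (k:ℤ)*η^2 - P*B*η,
              B + (k:ℤ)*ξ*η + P*A*η + (k:ℤ)*η*ξ + P*B*ξ + t*(k:ℤ)*η^2 + t*P*B*η, ?_, ?_⟩ <;>
      · rw [show D*(k+1) = D*k + D by ring, pr_add]
        show _ = _
        simp only [pmul]
        rw [hA, hB, hx, hy]
        push_cast
        ring

lemma levels (p : ℕ) (t : ℤ) (d ε : ℕ) (ξ η : ℤ)
    (hx : (pr t d).1 = 1 + (p:ℤ)^(ε+1)*ξ) (hy : (pr t d).2 = (p:ℤ)^(ε+1)*η) :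
    ∀ j : ℕ, ∃ ξj ηj : ℤ,
      (pr t (d*p^j)).1 = 1 + (p:ℤ)^(ε+1+j)*ξj ∧ (pr t (d*p^j)).2 = (p:ℤ)^(ε+1+j)*ηj
      ∧ (p:ℤ)^ε ∣ (ξj - ξ) ∧ (p:ℤ)^ε ∣ (ηj - η) := by
  intro j
  induction j with
  | zero => exact ⟨ξ, η, by simpa using hx, by simpa using hy, by simp, by simp⟩
  | succ j ih =>
      obtain ⟨ξj, ηj, hxj, hyj, hdx, hdy⟩ := ih
      obtain ⟨A, B, hA, hB⟩ := f2 t (d*p^j) ((p:ℤ)^(ε+1+j)) ξj ηj hxj hyj p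
      refine ⟨ξj + (p:ℤ)^(ε+j)*A, ηj + (p:ℤ)^(ε+j)*B, ?_, ?_, ?_, ?_⟩
      · rw [show d*p^(j+1) = d*p^j*p by ring, hA]; ring
      · rw [show d*p^(j+1) = d*p^j*p by ring, hB]; ring
      · have : ξj + (p:ℤ)^(ε+j)*A - ξ = (ξj - ξ) + (p:ℤ)^(ε+j)*A := by ring
        rw [this]
        exact dvd_add hdx (Dvd.dvd.mul_right (pow_dvd_pow _ (by omega)) A)
      · have : ηj + (p:ℤ)^(ε+j)*B - η = (ηj - η) + (p:ℤ)^(ε+j)*B := by ring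
        rw [this]
        exact dvd_add hdy (Dvd.dvd.mul_right (pow_dvd_pow _ (by omega)) B)

lemma int_fact (p : ℕ) (hp : p.Prime) (z : ℤ) (hz : z ≠ 0) :
    ∃ (v : ℕ) (u : ℤ), z = (p:ℤ)^v * u ∧ ¬ (p:ℤ) ∣ u := by
  have hn0 : z.natAbs ≠ 0 := Int.natAbs_ne_zero.mpr hz
  obtain ⟨m, hm, hnd⟩ : ∃ m, p ^ (z.natAbs.factorization p) * m = z.natAbs ∧ ¬ p ∣ m :=
    ⟨_, Nat.ordProj_mul_ordCompl_eq_self z.natAbs p, Nat.not_dvd_ordCompl hp hn0⟩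
  set v := z.natAbs.factorization p
  rcases Int.natAbs_eq z with h | h
  · refine ⟨v, (m : ℤ), ?_, ?_⟩
    · rw [h, ← hm]; push_cast; ring
    · exact fun hd => hnd (by exact_mod_cast hd)
  · refine ⟨v, -(m : ℤ), ?_, ?_⟩
    · rw [h, ← hm]; push_cast; ring
    · rw [dvd_neg]
      exact fun hd => hnd (by exact_mod_cast hd)

lemma key_unit (p : ℕ) (hp : p.Prime) (t S Y : ℤ) (e0 : ℕ) (he0 : 2 ≤ e0)
    (hnorm : (1+S)^2 + t*(1+S)*Y + Y^2 = 1)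
    (hS : (p:ℤ)^e0 ∣ S) (hY : (p:ℤ)^e0 ∣ Y) (hY0 : Y ≠ 0) :
    ∃ (e : ℕ) (ξ η : ℤ), e0 ≤ e ∧ S = (p:ℤ)^e*ξ ∧ Y = (p:ℤ)^e*η ∧ ¬ ((p:ℤ)^2 ∣ η) := by
  have hpne : (p:ℤ) ≠ 0 := by exact_mod_cast hp.ne_zero
  obtain ⟨vY, uY, hYf, hYu⟩ := int_fact p hp Y hY0
  have hle : ∀ (w : ℕ) (u : ℤ) (z : ℤ) (k : ℕ), z = (p:ℤ)^w * u → ¬ (p:ℤ) ∣ u →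
      (p:ℤ)^k ∣ z → k ≤ w := by
    intro w u z k hzf hu hdvd
    by_contra hlt
    push_neg at hlt
    have : (p:ℤ)^(w+1) ∣ z := dvd_trans (pow_dvd_pow _ (by omega)) hdvd
    rw [hzf, pow_succ] at this
    exact hu ((mul_dvd_mul_iff_left (pow_ne_zero w hpne)).mp this)
  have he0Y : e0 ≤ vY := hle vY uY Y e0 hYf hYu hY
  by_cases hc : (p:ℤ)^vY ∣ S
  · obtain ⟨ξ, hξ⟩ := hc
    refine ⟨vY, ξ, uY, he0Y, hξ, hYf, ?_⟩
    intro hdvd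
    exact hYu (dvd_trans (dvd_pow_self (p:ℤ) two_ne_zero) hdvd)
  · have hS0 : S ≠ 0 := by rintro rfl; exact hc (dvd_zero _)
    obtain ⟨vS, uS, hSf, hSu⟩ := int_fact p hp S hS0
    have hvSY : vS < vY := by
      by_contra hge
      push_neg at hge
      exact hc (dvd_trans (pow_dvd_pow _ hge) ⟨uS, hSf⟩)
    have he0S : e0 ≤ vS := hle vS uS S e0 hSf hSu hS
    set ην : ℤ := (p:ℤ)^(vY - vS) * uY with hην
    have hYeq : Y = (p:ℤ)^vS * ην := by
      rw [hYf, hην, ← mul_assoc, ← pow_add]; congr 2; omega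
    refine ⟨vS, uS, ην, he0S, hSf, hYeq, ?_⟩
    intro hdvd
    have hkey : uS * (S + 2) = -(ην * (t*(1+S) + Y)) := by
      have h1 : (p:ℤ)^vS * (uS * (S+2)) = (p:ℤ)^vS * (-(ην * (t*(1+S) + Y))) := by
        linear_combination hnorm - (S+2)*hSf - (t*(1+S)+Y)*hYeq
      exact mul_left_cancel₀ (pow_ne_zero vS hpne) h1
    have h2dvd : (p:ℤ)^2 ∣ uS * (S + 2) := by
      rw [hkey]
      exact dvd_neg.mpr (hdvd.mul_right _)
    have hprime : Prime (p:ℤ) := Nat.prime_iff_prime_int.mp hp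
    have hp2 : (p:ℤ)^2 ∣ S + 2 := hprime.pow_dvd_of_dvd_mul_left 2 hSu h2dvd
    have hpS : (p:ℤ)^2 ∣ S := dvd_trans (pow_dvd_pow _ he0) hS
    have : (p:ℤ)^2 ∣ 2 := by
      have h5 := dvd_sub hp2 hpS
      simpa using h5
    have hple : (p:ℤ)^2 ≤ 2 := Int.le_of_dvd (by norm_num) this
    have : (2:ℤ)^2 ≤ (p:ℤ)^2 := by
      apply pow_le_pow_left₀ (by norm_num)
      exact_mod_cast hp.two_le
    omega







variable {p : ℕ} [hp : Fact p.Prime]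

lemma ppos : (0:ℝ) < (p:ℝ) := by exact_mod_cast hp.out.pos

lemma pQne : ((p:ℕ) : ℚ_[p]) ≠ 0 := by
  exact_mod_cast (Nat.cast_ne_zero (R := ℚ_[p])).mpr hp.out.ne_zero

/-- ultrametric: adding something strictly smaller doesn't change the norm -/
lemma add_small (u v : ℚ_[p]) (h : ‖v‖ < ‖u‖) : ‖u + v‖ = ‖u‖ := by
  rw [Padic.add_eq_max_of_ne (ne_of_gt h)]
  exact max_eq_left h.le

/-- norm bound for `p^m * w * s` with `w` an integer -/
lemma norm_int_term (m : ℕ) (w : ℤ) (s : ℚ_[p]) (c : ℝ) (hs : ‖s‖ ≤ c) :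
    ‖((p:ℤ)^m * w : ℤ) * s‖ ≤ (p:ℝ)^(-(m:ℤ)) * c := by
  have hc : (0:ℝ) ≤ c := le_trans (norm_nonneg s) hs
  have : (((p:ℤ)^m * w : ℤ) : ℚ_[p]) = ((p:ℕ) : ℚ_[p])^m * (w : ℚ_[p]) := by push_cast; ring
  rw [this, mul_assoc, norm_mul, Padic.norm_p_pow]
  refine mul_le_mul_of_nonneg_left ?_ (zpow_nonneg (Nat.cast_nonneg p) _)
  calc ‖(w:ℚ_[p]) * s‖ = ‖(w:ℚ_[p])‖ * ‖s‖ := norm_mul _ _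
    _ ≤ 1 * c := mul_le_mul (Padic.norm_int_le_one w) hs (norm_nonneg _) zero_le_one
    _ = c := one_mul c

/-- approximate a unit-ball element of ℚ_p by a positive natural number -/
lemma nat_approx (z : ℚ_[p]) (hz : ‖z‖ ≤ 1) (M : ℕ) :
    ∃ k : ℕ, 1 ≤ k ∧ ‖(k:ℚ_[p]) - z‖ ≤ (p:ℝ)^(-(M:ℤ)) := by
  set zz : ℤ_[p] := ⟨z, hz⟩ with hzz
  have hsp := PadicInt.appr_spec M zz
  have h1 : ‖zz - (zz.appr M : ℤ_[p])‖ ≤ (p:ℝ)^(-(M:ℤ)) :=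
    (PadicInt.norm_le_pow_iff_mem_span_pow _ M).mpr hsp
  refine ⟨zz.appr M + p^M, by have : 1 ≤ p^M := Nat.one_le_pow _ _ hp.out.pos; omega, ?_⟩
  have hco : ((zz.appr M : ℤ_[p]) : ℚ_[p]) = ((zz.appr M : ℕ) : ℚ_[p]) := by push_cast; rfl
  have h2 : ‖((zz.appr M : ℕ) : ℚ_[p]) - z‖ ≤ (p:ℝ)^(-(M:ℤ)) := by
    have : ((zz - (zz.appr M : ℤ_[p]) : ℤ_[p]) : ℚ_[p]) = z - ((zz.appr M : ℕ) : ℚ_[p]) := by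
      push_cast [hzz]
      rfl
    rw [← norm_neg]
    have hnd : ‖(zz - (zz.appr M : ℤ_[p]) : ℤ_[p])‖ = ‖z - ((zz.appr M : ℕ) : ℚ_[p])‖ := by
      rw [PadicInt.norm_def, this]
    rw [← hnd] at *
    rw [neg_sub, ← this, ← PadicInt.norm_def]; exact h1
  have hsplit : ((zz.appr M + p^M : ℕ) : ℚ_[p]) - z
      = (((zz.appr M : ℕ) : ℚ_[p]) - z) + ((p:ℚ_[p]))^M := by push_cast; ring
  rw [hsplit]
  calc ‖_ + _‖ ≤ max ‖((zz.appr M : ℕ) : ℚ_[p]) - z‖ ‖((p:ℚ_[p]))^M‖ := Padic.nonarchimedean _ _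
    _ ≤ (p:ℝ)^(-(M:ℤ)) := by
        apply max_le h2
        rw [Padic.norm_p_pow]

lemma newton (t : ℤ) (s : ℕ → ℚ_[p])
    (hs : ∀ n, s (n+2) = (t:ℤ) * s (n+1) - s n)
    (d ε : ℕ) (hd : 1 ≤ d) (ξ η : ℤ)
    (hx : (pr t d).1 = 1 + (p:ℤ)^(ε+2)*ξ) (hy : (pr t d).2 = (p:ℤ)^(ε+2)*η)
    (c1 : ℝ) (hc0 : ‖s 0‖ ≤ c1) (hc1 : ‖s 1‖ ≤ c1)
    (hbig : c1 * (p:ℝ)^(-(ε:ℤ)-1) < ‖(ξ:ℚ_[p]) * s 0 + (η:ℚ_[p]) * s 1‖)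
    (hbase : ‖s 0‖ ≤ (p:ℝ)^(-(ε:ℤ)-2) * ‖(ξ:ℚ_[p]) * s 0 + (η:ℚ_[p]) * s 1‖) :
    ∀ j : ℕ, ∃ n : ℕ, d ∣ n ∧ j ≤ n ∧
      ‖s n‖ ≤ (p:ℝ)^(-(ε:ℤ)-2-j) * ‖(ξ:ℚ_[p]) * s 0 + (η:ℚ_[p]) * s 1‖ := by
  set γ : ℝ := ‖(ξ:ℚ_[p]) * s 0 + (η:ℚ_[p]) * s 1‖ with hγdef
  have hc1nn : (0:ℝ) ≤ c1 := le_trans (norm_nonneg _) hc0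
  have hγpos : 0 < γ := by
    refine lt_of_le_of_lt ?_ hbig
    positivity
  have hγc1 : γ ≤ c1 := by
    rw [hγdef]
    calc ‖(ξ:ℚ_[p]) * s 0 + (η:ℚ_[p]) * s 1‖
        ≤ max ‖(ξ:ℚ_[p]) * s 0‖ ‖(η:ℚ_[p]) * s 1‖ := Padic.nonarchimedean _ _
      _ ≤ c1 := by
          apply max_le
          · calc ‖(ξ:ℚ_[p]) * s 0‖ = ‖(ξ:ℚ_[p])‖ * ‖s 0‖ := norm_mul _ _
              _ ≤ 1 * c1 := mul_le_mul (Padic.norm_int_le_one ξ) hc0 (norm_nonneg _) zero_le_one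
              _ = c1 := one_mul c1
          · calc ‖(η:ℚ_[p]) * s 1‖ = ‖(η:ℚ_[p])‖ * ‖s 1‖ := norm_mul _ _
              _ ≤ 1 * c1 := mul_le_mul (Padic.norm_int_le_one η) hc1 (norm_nonneg _) zero_le_one
              _ = c1 := one_mul c1
  have hrep := solve (R := ℚ_[p]) t s hs
  have lv := levels p t d (ε+1) ξ η (by rwa [show ε+1+1 = ε+2 from rfl]) (by rwa [show ε+1+1 = ε+2 from rfl])
  intro j
  induction j with
  | zero =>
      refine ⟨0, dvd_zero d, le_rfl, ?_⟩
      simpa using hbase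
  | succ j ih =>
      obtain ⟨n, hdn, hjn, hsn⟩ := ih
      obtain ⟨ξj, ηj, hxj, hyj, hdξ, hdη⟩ := lv j
      rw [show ε+1+1 = ε+2 from rfl] at hxj hyj
      -- congruence of (pr t n) to (1,0) mod p^(ε+2)
      obtain ⟨k0, hk0⟩ := hdn
      obtain ⟨A0, B0, hA0, hB0⟩ := f2 t d ((p:ℤ)^(ε+2)) ξ η hx hy k0
      rw [← hk0] at hA0 hB0
      have hxn1 : ∃ w : ℤ, (pr t n).1 - 1 = (p:ℤ)^(ε+1) * w := by
        refine ⟨(p:ℤ)*((k0:ℤ)*ξ + (p:ℤ)^(ε+2)*A0), ?_⟩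
        rw [hA0]; ring
      have hyn1 : ∃ w : ℤ, (pr t n).2 = (p:ℤ)^(ε+1) * w := by
        refine ⟨(p:ℤ)*((k0:ℤ)*η + (p:ℤ)^(ε+2)*B0), ?_⟩
        rw [hB0]; ring
      obtain ⟨w1, hw1⟩ := hxn1
      obtain ⟨w2, hw2⟩ := hyn1
      obtain ⟨v1, hv1⟩ := hdξ
      obtain ⟨v2, hv2⟩ := hdη
      -- the derivative-like quantity G
      set a1 : ℤ := ξj * (pr t n).1 - ηj * (pr t n).2 with ha1
      set a2 : ℤ := ηj * (pr t n).1 + ξj * (pr t n).2 + t * ηj * (pr t n).2 with ha2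
      set G : ℚ_[p] := (a1:ℚ_[p]) * s 0 + (a2:ℚ_[p]) * s 1 with hGdef
      have hu1 : a1 - ξ = (p:ℤ)^(ε+1) * (ξj * w1 + v1 - ηj * w2) := by
        rw [ha1]
        linear_combination ξj*hw1 + hv1 - ηj*hw2
      have hu2 : a2 - η = (p:ℤ)^(ε+1) * (ηj * w1 + v2 + ξj * w2 + t * ηj * w2) := by
        rw [ha2]
        linear_combination ηj*hw1 + hv2 + ξj*hw2 + t*ηj*hw2
      have hGnorm : ‖G‖ = γ := by
        have hsplit : G = ((ξ:ℚ_[p]) * s 0 + (η:ℚ_[p]) * s 1)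
            + (((a1 - ξ : ℤ):ℚ_[p]) * s 0 + ((a2 - η : ℤ):ℚ_[p]) * s 1) := by
          push_cast
          ring
        rw [hsplit]
        apply add_small
        rw [← hγdef]
        calc ‖((a1 - ξ : ℤ):ℚ_[p]) * s 0 + ((a2 - η : ℤ):ℚ_[p]) * s 1‖
            ≤ max ‖((a1 - ξ : ℤ):ℚ_[p]) * s 0‖ ‖((a2 - η : ℤ):ℚ_[p]) * s 1‖ :=
              Padic.nonarchimedean _ _
          _ ≤ (p:ℝ)^(-(ε+1:ℕ):ℤ) * c1 := by
              apply max_le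
              · rw [hu1]; exact norm_int_term (ε+1) _ _ c1 hc0
              · rw [hu2]; exact norm_int_term (ε+1) _ _ c1 hc1
          _ < γ := by
              rw [show (-(ε+1:ℕ):ℤ) = (-(ε:ℤ)-1) by push_cast; ring, mul_comm]
              exact hbig
      have hGne : G ≠ 0 := by
        intro h0
        rw [h0, norm_zero] at hGnorm
        exact absurd hGnorm.symm (ne_of_gt hγpos)
      -- the p-adic scale at this level
      set E : ℕ := ε + 2 + j with hE
      have hPne : ((p:ℚ_[p]))^E ≠ 0 := pow_ne_zero _ pQne
      set z : ℚ_[p] := -(s n) / (((p:ℚ_[p]))^E * G) with hz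
      have hzas : s n = -(z * (((p:ℚ_[p]))^E * G)) := by
        rw [hz]
        field_simp
      have hEexp : (-(E:ℕ):ℤ) = -(ε:ℤ)-2-(j:ℤ) := by rw [hE]; push_cast; ring
      have hznorm : ‖z‖ ≤ 1 := by
        rw [hz, norm_div, norm_neg, norm_mul, Padic.norm_p_pow, hGnorm,
          div_le_one (mul_pos (zpow_pos (ppos (p := p)) _) hγpos), hEexp]
        exact hsn
      obtain ⟨k, hk1, hkz⟩ := nat_approx z hznorm E
      -- build n'
      obtain ⟨A, B, hA, hB⟩ := f2 t (d*p^j) ((p:ℤ)^E) ξj ηj hxj hyj k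
      set n' : ℕ := n + d * p^j * k with hn'
      have ix : (pr t n').1 = (pr t n).1 + (k:ℤ)*(p:ℤ)^E*a1
          + ((p:ℤ)^E)^2*(A*(pr t n).1 - B*(pr t n).2) := by
        rw [hn', pr_add t n (d*p^j*k)]
        show (pr t n).1 * (pr t (d*p^j*k)).1 - (pr t n).2 * (pr t (d*p^j*k)).2 = _
        rw [hA, hB, ha1]
        ring
      have iy : (pr t n').2 = (pr t n).2 + (k:ℤ)*(p:ℤ)^E*a2
          + ((p:ℤ)^E)^2*(B*(pr t n).1 + A*(pr t n).2 + t*B*(pr t n).2) := by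
        rw [hn', pr_add t n (d*p^j*k)]
        show (pr t n).1 * (pr t (d*p^j*k)).2 + (pr t n).2 * (pr t (d*p^j*k)).1
          + t * (pr t n).2 * (pr t (d*p^j*k)).2 = _
        rw [hA, hB, ha2]
        ring
      set H : ℚ_[p] := ((A*(pr t n).1 - B*(pr t n).2 : ℤ):ℚ_[p]) * s 0
          + ((B*(pr t n).1 + A*(pr t n).2 + t*B*(pr t n).2 : ℤ):ℚ_[p]) * s 1 with hH
      have hsn' : s n' = s n + (k:ℚ_[p]) * (((p:ℚ_[p]))^E * G) + (((p:ℚ_[p]))^E)^2 * H := by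
        have cx := congrArg (fun w : ℤ => (w:ℚ_[p])) ix
        have cy := congrArg (fun w : ℤ => (w:ℚ_[p])) iy
        push_cast at cx cy
        rw [hrep n', cx, cy, hrep n, hGdef, hH]
        push_cast
        ring
      refine ⟨n', ⟨k0 + p^j*k, by rw [hn', hk0]; push_cast; ring⟩, by
        have : 1 ≤ d * p^j * k := by
          have hp1 : 1 ≤ p^j := Nat.one_le_pow _ _ hp.out.pos
          calc 1 ≤ 1*1*1 := by norm_num
            _ ≤ d * p^j * k := by
              apply Nat.mul_le_mul (Nat.mul_le_mul hd hp1) hk1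
        omega, ?_⟩
      -- estimate
      have key1 : ‖s n + (k:ℚ_[p]) * (((p:ℚ_[p]))^E * G)‖ ≤ (p:ℝ)^(-(E:ℕ):ℤ) * ((p:ℝ)^(-(E:ℕ):ℤ) * γ) := by
        have heq : s n + (k:ℚ_[p]) * (((p:ℚ_[p]))^E * G) = ((k:ℚ_[p]) - z) * (((p:ℚ_[p]))^E * G) := by
          rw [hzas]; ring
        rw [heq, norm_mul, norm_mul, Padic.norm_p_pow, hGnorm]
        exact mul_le_mul hkz le_rfl (by positivity) (by positivity)
      have key2 : ‖(((p:ℚ_[p]))^E)^2 * H‖ ≤ (p:ℝ)^(-(E:ℕ):ℤ) * ((p:ℝ)^(-(E:ℕ):ℤ) * c1) := by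
        have hHb : ‖H‖ ≤ c1 := by
          rw [hH]
          refine le_trans (Padic.nonarchimedean _ _) (max_le ?_ ?_)
          · rw [norm_mul]
            calc ‖((A*(pr t n).1 - B*(pr t n).2 : ℤ):ℚ_[p])‖ * ‖s 0‖
                ≤ 1 * c1 := mul_le_mul (Padic.norm_int_le_one _) hc0 (norm_nonneg _) zero_le_one
              _ = c1 := one_mul c1
          · rw [norm_mul]
            calc ‖((B*(pr t n).1 + A*(pr t n).2 + t*B*(pr t n).2 : ℤ):ℚ_[p])‖ * ‖s 1‖
                ≤ 1 * c1 := mul_le_mul (Padic.norm_int_le_one _) hc1 (norm_nonneg _) zero_le_one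
              _ = c1 := one_mul c1
        rw [norm_mul, norm_pow, Padic.norm_p_pow]
        refine le_trans (mul_le_mul_of_nonneg_left hHb (by positivity)) (le_of_eq (by ring))
      have hmax : ‖s n'‖ ≤ (p:ℝ)^(-(E:ℕ):ℤ) * ((p:ℝ)^(-(E:ℕ):ℤ) * c1) := by
        rw [hsn']
        refine le_trans (Padic.nonarchimedean _ _) (max_le (le_trans key1 ?_) key2)
        refine mul_le_mul_of_nonneg_left ?_ (by positivity)
        exact mul_le_mul_of_nonneg_left hγc1 (by positivity)
      refine le_trans hmax ?_
      have hstep : (p:ℝ)^(-(E:ℕ):ℤ) * c1 ≤ (p:ℝ)^(-(1:ℤ)) * γ := by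
        have h1 : (p:ℝ)^(-(E:ℕ):ℤ) * c1 = (p:ℝ)^(-(1:ℤ)) * ((p:ℝ)^(-(ε:ℤ)-1-j) * c1) := by
          rw [← mul_assoc, ← zpow_add₀ (ne_of_gt (ppos (p := p)))]
          congr 1
          rw [hEexp]
          ring
        rw [h1]
        apply mul_le_mul_of_nonneg_left ?_ (by positivity)
        calc (p:ℝ)^(-(ε:ℤ)-1-j) * c1 ≤ (p:ℝ)^(-(ε:ℤ)-1) * c1 := by
              apply mul_le_mul_of_nonneg_right ?_ hc1nn
              apply zpow_le_zpow_right₀ ?_ (by omega)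
              exact_mod_cast hp.out.one_lt.le
          _ ≤ γ := by rw [mul_comm]; exact le_of_lt hbig
      calc (p:ℝ)^(-(E:ℕ):ℤ) * ((p:ℝ)^(-(E:ℕ):ℤ) * c1)
          ≤ (p:ℝ)^(-(E:ℕ):ℤ) * ((p:ℝ)^(-(1:ℤ)) * γ) := by
            apply mul_le_mul_of_nonneg_left hstep (by positivity)
        _ = (p:ℝ)^(-(ε:ℤ)-2-(j+1:ℕ)) * γ := by
            rw [← mul_assoc, ← zpow_add₀ (ne_of_gt (ppos (p := p)))]
            congr 2
            rw [hEexp]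
            push_cast
            ring



def qr (x y a b c q0 r0 : ℤ) : ℕ → ℤ × ℤ
  | 0 => (q0, r0)
  | n+1 => ((x - b*y)*(qr x y a b c q0 r0 n).1 - 2*a*y*(qr x y a b c q0 r0 n).2,
            2*c*y*(qr x y a b c q0 r0 n).1 + (x + b*y)*(qr x y a b c q0 r0 n).2)

lemma qr_rec (x y a b c q0 r0 : ℤ) (hpell : x^2 - (b^2 - 4*a*c)*y^2 = 1) (n : ℕ) :
    (qr x y a b c q0 r0 (n+2)).1
      = 2*x*(qr x y a b c q0 r0 (n+1)).1 - (qr x y a b c q0 r0 n).1 ∧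
    (qr x y a b c q0 r0 (n+2)).2
      = 2*x*(qr x y a b c q0 r0 (n+1)).2 - (qr x y a b c q0 r0 n).2 := by
  constructor
  · show (x - b*y)*((x - b*y)*(qr x y a b c q0 r0 n).1 - 2*a*y*(qr x y a b c q0 r0 n).2)
        - 2*a*y*(2*c*y*(qr x y a b c q0 r0 n).1 + (x + b*y)*(qr x y a b c q0 r0 n).2) = _
    have h : (qr x y a b c q0 r0 (n+1)).1
        = (x - b*y)*(qr x y a b c q0 r0 n).1 - 2*a*y*(qr x y a b c q0 r0 n).2 := rfl
    rw [h]
    linear_combination (-(qr x y a b c q0 r0 n).1) * hpell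
  · show 2*c*y*((x - b*y)*(qr x y a b c q0 r0 n).1 - 2*a*y*(qr x y a b c q0 r0 n).2)
        + (x + b*y)*(2*c*y*(qr x y a b c q0 r0 n).1 + (x + b*y)*(qr x y a b c q0 r0 n).2) = _
    have h : (qr x y a b c q0 r0 (n+1)).2
        = 2*c*y*(qr x y a b c q0 r0 n).1 + (x + b*y)*(qr x y a b c q0 r0 n).2 := rfl
    rw [h]
    linear_combination (-(qr x y a b c q0 r0 n).2) * hpell

/-- the real linear form q·ρ - r is an eigenvector of the recursion -/
lemma sigma_step (x y a b c q0 r0 : ℤ) (ρ : ℝ)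
    (hρ : (a:ℝ)*ρ^2 + b*ρ + c = 0) (n : ℕ) :
    ((qr x y a b c q0 r0 (n+1)).1 : ℝ) * ρ - ((qr x y a b c q0 r0 (n+1)).2 : ℝ)
      = ((x:ℝ) + y*(2*a*ρ + b)) *
        (((qr x y a b c q0 r0 n).1 : ℝ) * ρ - ((qr x y a b c q0 r0 n).2 : ℝ)) := by
  have h1 : (qr x y a b c q0 r0 (n+1)).1
      = (x - b*y)*(qr x y a b c q0 r0 n).1 - 2*a*y*(qr x y a b c q0 r0 n).2 := rfl
  have h2 : (qr x y a b c q0 r0 (n+1)).2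
      = 2*c*y*(qr x y a b c q0 r0 n).1 + (x + b*y)*(qr x y a b c q0 r0 n).2 := rfl
  rw [h1, h2]
  push_cast
  linear_combination (-(2:ℝ)) * ((qr x y a b c q0 r0 n).1 : ℝ) * (y:ℝ) * hρ

lemma aeval2 {R : Type*} [CommRing R] (f : Polynomial ℤ) (hdeg : f.natDegree = 2) (x : R) :
    Polynomial.aeval x f = (f.coeff 0 : R) + (f.coeff 1 : R) * x + (f.coeff 2 : R) * x^2 := by
  have h := Polynomial.aeval_eq_sum_range (p := f) (S := R) x
  rw [hdeg] at h
  rw [h]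
  rw [Finset.sum_range_succ, Finset.sum_range_succ, Finset.sum_range_one]
  push_cast [zsmul_eq_mul]
  ring

lemma irr_of_irreducible (f : Polynomial ℤ) (hf : Irreducible f) (hdeg : f.natDegree = 2)
    (α : ℝ) (hroot : Polynomial.aeval α f = 0) :
    ∀ q r : ℤ, q ≠ 0 → (q:ℝ) * α ≠ (r:ℝ) := by
  intro q r hq habs
  have hprim : f.IsPrimitive := by
    intro k hk
    obtain ⟨g, hg⟩ := hk
    rcases hf.isUnit_or_isUnit hg with h | h
    · exact Polynomial.isUnit_C.mp h
    · exfalso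
      have hdg : g.natDegree = 0 := Polynomial.natDegree_eq_zero_of_isUnit h
      have : f.natDegree ≤ (Polynomial.C k).natDegree + g.natDegree := hg ▸ Polynomial.natDegree_mul_le
      rw [Polynomial.natDegree_C, hdg, hdeg] at this
      omega
  set fQ : Polynomial ℚ := f.map (Int.castRingHom ℚ) with hfQ
  have hfQirr : Irreducible fQ :=
    (Polynomial.IsPrimitive.Int.irreducible_iff_irreducible_map_cast hprim).mp hf
  have hfQdeg : fQ.natDegree = 2 := by
    rw [hfQ, Polynomial.natDegree_map_eq_of_injective Int.cast_injective]
    exact hdeg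
  have hfQne : fQ ≠ 0 := fun h0 => by simp [h0] at hfQdeg
  set ρ : ℚ := (r : ℚ) / (q : ℚ) with hρ
  have hqR : (q:ℝ) ≠ 0 := Int.cast_ne_zero.mpr hq
  have hαρ : α = algebraMap ℚ ℝ ρ := by
    rw [hρ]
    rw [show algebraMap ℚ ℝ ((r:ℚ)/(q:ℚ)) = (r:ℝ)/(q:ℝ) by simp, eq_div_iff hqR]
    linarith [habs]
  have haev : Polynomial.aeval α fQ = 0 := by
    rw [hfQ, ← algebraMap_int_eq, Polynomial.aeval_map_algebraMap]
    exact hroot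
  have hint : IsIntegral ℚ α := (isAlgebraic_iff_isIntegral).mp ⟨fQ, hfQne, haev⟩
  have hdvd : minpoly ℚ α ∣ fQ := minpoly.dvd ℚ α haev
  have hmin : minpoly ℚ α = Polynomial.X - Polynomial.C ρ := by
    rw [hαρ]
    exact minpoly.eq_X_sub_C ℝ ρ
  obtain ⟨g, hg⟩ := hdvd
  have hXne : (Polynomial.X - Polynomial.C ρ) ≠ 0 := Polynomial.X_sub_C_ne_zero ρ
  have hgne : g ≠ 0 := by
    intro h0
    rw [h0, mul_zero] at hg
    exact hfQne hg
  rcases hfQirr.isUnit_or_isUnit hg with h | h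
  · have h0 : (minpoly ℚ α).natDegree = 0 := Polynomial.natDegree_eq_zero_of_isUnit h
    rw [hmin, Polynomial.natDegree_X_sub_C] at h0
    omega
  · have : g.natDegree = 0 := Polynomial.natDegree_eq_zero_of_isUnit h
    have hd2 : fQ.natDegree = (minpoly ℚ α).natDegree + g.natDegree := by
      rw [hg]
      exact Polynomial.natDegree_mul (by rw [hmin]; exact hXne) hgne
    rw [hfQdeg, hmin, Polynomial.natDegree_X_sub_C, this] at hd2
    omega


end Stmt7Aux

set_option maxHeartbeats 4000000 in
open Stmt7Aux in
/-- Theorem 1.2: if `α ∈ ℝ` is quadratic with minimal polynomial `f ∈ ℤ[X]` and `β ∈ ℚ_p`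
satisfies `f(β) ≠ 0`, then `(α, β)` satisfies (EK+). -/
theorem stmt7 (p : ℕ) [Fact p.Prime] (α : ℝ) (f : Polynomial ℤ)
    (hf : Irreducible f) (hdeg : f.natDegree = 2) (hroot : Polynomial.aeval α f = 0)
    (β : ℚ_[p]) (hβ : Polynomial.aeval β f ≠ 0) :
    sInf {x : ℝ | ∃ q r : ℤ, q ≠ 0 ∧ r ≠ 0 ∧
        x = max |(q : ℝ)| |(r : ℝ)| * |(q : ℝ) * α - (r : ℝ)| *
          ‖(q : ℚ_[p]) * β - (r : ℚ_[p])‖} = 0 := by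
  have hprime : p.Prime := Fact.out
  have hppos : (0:ℝ) < (p:ℝ) := by exact_mod_cast hprime.pos
  have hp1R : (1:ℝ) < (p:ℝ) := by exact_mod_cast hprime.one_lt
  set Sset : Set ℝ := {x : ℝ | ∃ q r : ℤ, q ≠ 0 ∧ r ≠ 0 ∧
      x = max |(q : ℝ)| |(r : ℝ)| * |(q : ℝ) * α - (r : ℝ)| *
        ‖(q : ℚ_[p]) * β - (r : ℚ_[p])‖} with hSset
  -- coefficients
  set a : ℤ := f.coeff 2 with hadef
  set b : ℤ := f.coeff 1 with hbdef
  set c : ℤ := f.coeff 0 with hcdef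
  have ha0 : a ≠ 0 := by
    have h1 : f.leadingCoeff ≠ 0 := Polynomial.leadingCoeff_ne_zero.mpr hf.ne_zero
    rwa [Polynomial.leadingCoeff, hdeg] at h1
  have haR : (a:ℝ) ≠ 0 := Int.cast_ne_zero.mpr ha0
  have hαeq : (a:ℝ)*α^2 + (b:ℝ)*α + (c:ℝ) = 0 := by
    have h := aeval2 f hdeg (x := α)
    rw [hroot, ← hadef, ← hbdef, ← hcdef] at h
    linarith [h]
  set F : ℚ_[p] := (c:ℚ_[p]) + (b:ℚ_[p])*β + (a:ℚ_[p])*β^2 with hFdef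
  have hF0 : F ≠ 0 := by
    rw [hFdef]
    intro h0
    apply hβ
    rw [aeval2 f hdeg β, ← hadef, ← hbdef, ← hcdef]
    exact h0
  have hFn : 0 < ‖F‖ := norm_pos_iff.mpr hF0
  have irr : ∀ q r : ℤ, q ≠ 0 → (q:ℝ) * α ≠ (r:ℝ) := irr_of_irreducible f hf hdeg α hroot
  -- real quadratic setup
  set sD : ℝ := 2*(a:ℝ)*α + (b:ℝ) with hsDdef
  have hsD2 : sD^2 = ((b^2 - 4*a*c : ℤ) : ℝ) := by
    rw [hsDdef]
    push_cast
    linear_combination 4*(a:ℝ)*hαeq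
  have hsD0 : sD ≠ 0 := by
    intro h0
    apply irr (2*a) (-b) (mul_ne_zero two_ne_zero ha0)
    push_cast
    rw [hsDdef] at h0
    linarith
  have hDpos : (0:ℤ) < b^2 - 4*a*c := by
    have h1 : (0:ℝ) < sD^2 := lt_of_le_of_ne (sq_nonneg sD) (Ne.symm (pow_ne_zero 2 hsD0))
    rw [hsD2] at h1
    exact_mod_cast h1
  have hDns : ¬ IsSquare (b^2 - 4*a*c) := by
    rintro ⟨k, hk⟩
    have hsq : (sD - (k:ℝ))*(sD + (k:ℝ)) = 0 := by
      have : sD^2 = ((k:ℝ))^2 := by rw [hsD2, hk]; push_cast; ring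
      linear_combination this
    rcases mul_eq_zero.mp hsq with h1 | h1
    · apply irr (2*a) (k - b) (mul_ne_zero two_ne_zero ha0)
      push_cast
      rw [hsDdef] at h1
      linarith
    · apply irr (2*a) (-k - b) (mul_ne_zero two_ne_zero ha0)
      push_cast
      rw [hsDdef] at h1
      linarith
  obtain ⟨x0, y0, hp0, hy0⟩ := Pell.exists_of_not_isSquare hDpos hDns
  have hpellR : ∀ (x y : ℤ), x^2 - (b^2-4*a*c)*y^2 = 1 →
      (x:ℝ)^2 - ((b^2-4*a*c : ℤ):ℝ)*(y:ℝ)^2 = 1 := by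
    intro x y h
    exact_mod_cast congrArg (fun z : ℤ => (z:ℝ)) h
  have hUnot1 : ∀ (x y : ℤ), y ≠ 0 → x^2 - (b^2-4*a*c)*y^2 = 1 → |(x:ℝ) + (y:ℝ)*sD| ≠ 1 := by
    intro x y hy hxy habs1
    rcases (abs_eq (by norm_num : (0:ℝ) ≤ 1)).mp habs1 with h1 | h1
    · apply irr (2*a*y) (1 - x - y*b) (by
        apply mul_ne_zero (mul_ne_zero two_ne_zero ha0) hy)
      push_cast
      rw [hsDdef] at h1
      linarith
    · apply irr (2*a*y) (-1 - x - y*b) (by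
        apply mul_ne_zero (mul_ne_zero two_ne_zero ha0) hy)
      push_cast
      rw [hsDdef] at h1
      linarith
  obtain ⟨x1, y1, hy1, hpell, hUlt⟩ : ∃ x1 y1 : ℤ, y1 ≠ 0 ∧ x1^2 - (b^2-4*a*c)*y1^2 = 1 ∧
      |(x1:ℝ) + (y1:ℝ)*sD| < 1 := by
    have hU0U0' : ((x0:ℝ) + y0*sD) * ((x0:ℝ) - y0*sD) = 1 := by
      have := hpellR x0 y0 hp0
      linear_combination this - (y0:ℝ)^2 * hsD2
    rcases lt_or_gt_of_ne (hUnot1 x0 y0 hy0 hp0) with h | h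
    · exact ⟨x0, y0, hy0, hp0, h⟩
    · refine ⟨x0, -y0, neg_ne_zero.mpr hy0, by linear_combination hp0, ?_⟩
      have heq : (x0:ℝ) + ((-y0 : ℤ):ℝ)*sD = (x0:ℝ) - y0*sD := by push_cast; ring
      rw [heq]
      have habs : |(x0:ℝ) + y0*sD| * |(x0:ℝ) - y0*sD| = 1 := by
        rw [← abs_mul, hU0U0', abs_one]
      by_contra hcon
      push_neg at hcon
      have hmul : |(x0:ℝ) + y0*sD| * 1 ≤ |(x0:ℝ) + y0*sD| * |(x0:ℝ) - y0*sD| :=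
        mul_le_mul_of_nonneg_left hcon (abs_nonneg _)
      rw [mul_one, habs] at hmul
      linarith
  set U : ℝ := (x1:ℝ) + (y1:ℝ)*sD with hUdef
  set U' : ℝ := (x1:ℝ) - (y1:ℝ)*sD with hU'def
  have hUU' : U * U' = 1 := by
    rw [hUdef, hU'def]
    linear_combination (hpellR x1 y1 hpell) - (y1:ℝ)^2 * hsD2
  have habsU : |U| < 1 := hUlt
  have habsUU' : |U| * |U'| = 1 := by rw [← abs_mul, hUU', abs_one]
  have habsU' : 1 < |U'| := by
    by_contra hcon
    push_neg at hcon
    have hmul : |U| * |U'| ≤ |U| * 1 := mul_le_mul_of_nonneg_left hcon (abs_nonneg U)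
    rw [habsUU', mul_one] at hmul
    linarith
  have habsUpos : 0 < |U| := by
    by_contra hcon
    push_neg at hcon
    have h0 : |U| = 0 := le_antisymm hcon (abs_nonneg U)
    rw [h0, zero_mul] at habsUU'
    norm_num at habsUU'
  set t : ℤ := 2*x1 with htdef
  have hU2 : U*U = (t:ℝ)*U - 1 := by
    rw [hUdef, htdef]
    push_cast
    linear_combination (y1:ℝ)^2*hsD2 - (hpellR x1 y1 hpell)
  have hU'2 : U'*U' = (t:ℝ)*U' - 1 := by
    rw [hU'def, htdef]
    push_cast
    linear_combination (y1:ℝ)^2*hsD2 - (hpellR x1 y1 hpell)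
  have hUpow : ∀ n : ℕ, ((pr t n).1 : ℝ) + ((pr t n).2 : ℝ) * U = U ^ n := upow t U hU2
  have hU'pow : ∀ n : ℕ, ((pr t n).1 : ℝ) + ((pr t n).2 : ℝ) * U' = U' ^ n := upow t U' hU'2
  -- p-adic constants
  set c1 : ℝ := max 1 ‖β‖ with hc1def
  have hc11 : (1:ℝ) ≤ c1 := le_max_left _ _
  have hc1pos : (0:ℝ) < c1 := lt_of_lt_of_le one_pos hc11
  set cβ : ℝ := if ‖β‖ ≤ 1 then 1 else ‖β‖⁻¹ with hcβdef
  have hcβpos : 0 < cβ := by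
    rw [hcβdef]
    split_ifs with h
    · exact one_pos
    · push_neg at h
      exact inv_pos.mpr (lt_trans one_pos h)
  have hcβ1 : cβ ≤ 1 := by
    rw [hcβdef]
    split_ifs with h
    · exact le_rfl
    · push_neg at h
      exact le_of_lt (inv_lt_one_of_one_lt₀ h)
  have h2y1 : (2*y1 : ℤ) ≠ 0 := mul_ne_zero two_ne_zero hy1
  have h2y1Q : ((2*y1 : ℤ):ℚ_[p]) ≠ 0 := Int.cast_ne_zero.mpr h2y1
  have h2y1n : 0 < ‖((2*y1 : ℤ):ℚ_[p])‖ := norm_pos_iff.mpr h2y1Q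
  set γd : ℝ := ‖((2*y1:ℤ):ℚ_[p])‖ * ‖F‖ * cβ * (p:ℝ)^(-(2:ℤ)) with hγddef
  have hγdpos : 0 < γd := by
    rw [hγddef]
    have : (0:ℝ) < (p:ℝ)^(-(2:ℤ)) := zpow_pos hppos _
    positivity
  -- choose e0
  obtain ⟨N0, hN0⟩ := pow_unbounded_of_one_lt (c1/γd) hp1R
  set e0 : ℕ := N0 + 2 with he0def
  have he02 : 2 ≤ e0 := by omega
  have he0big : c1 * (p:ℝ)^(1-(e0:ℤ)) < γd := by
    have h1 : c1 < γd * (p:ℝ)^(N0:ℕ) := by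
      rw [div_lt_iff₀ hγdpos] at hN0
      linarith [hN0]
    have h2 : (1-(e0:ℤ)) = -((N0+1 : ℕ):ℤ) := by rw [he0def]; push_cast; ring
    rw [h2, zpow_neg, ← div_eq_mul_inv, div_lt_iff₀ (zpow_pos hppos _)]
    calc c1 < γd * (p:ℝ)^(N0:ℕ) := h1
      _ ≤ γd * (p:ℝ)^((N0+1:ℕ):ℤ) := by
          apply mul_le_mul_of_nonneg_left ?_ (le_of_lt hγdpos)
          rw [show ((p:ℝ)^(N0:ℕ) : ℝ) = (p:ℝ)^((N0:ℕ):ℤ) from (zpow_natCast _ _).symm]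
          exact zpow_le_zpow_right₀ hp1R.le (by omega)
  -- choose d
  obtain ⟨d, hd1, hdx, hdy⟩ := exists_d t (p^e0)
    (le_trans hprime.two_le (Nat.le_self_pow (by omega) p))
  have hdxZ : (p:ℤ)^e0 ∣ ((pr t d).1 - 1) := by
    have : ((p^e0 : ℕ):ℤ) = (p:ℤ)^e0 := by push_cast; ring
    rwa [this] at hdx
  have hdyZ : (p:ℤ)^e0 ∣ (pr t d).2 := by
    have : ((p^e0 : ℕ):ℤ) = (p:ℤ)^e0 := by push_cast; ring
    rwa [this] at hdy
  have hY0 : (pr t d).2 ≠ 0 := by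
    intro hzero
    have h1 : ((pr t d).1 : ℝ) = U ^ d := by
      have := hUpow d
      rw [hzero] at this
      push_cast at this
      linarith
    have h2 : ((pr t d).1 : ℝ) = U' ^ d := by
      have := hU'pow d
      rw [hzero] at this
      push_cast at this
      linarith
    have l1 : |((pr t d).1 : ℝ)| < 1 := by
      rw [h1, abs_pow]
      exact pow_lt_one₀ (abs_nonneg U) habsU (by omega)
    have l2 : (1:ℝ) ≤ |((pr t d).1 : ℝ)| := by
      rw [h2, abs_pow]
      calc (1:ℝ) = 1^d := (one_pow d).symm
        _ ≤ |U'|^d := pow_le_pow_left₀ (by norm_num) habsU'.le d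
    linarith
  obtain ⟨e, ξ, η, he0e, hSe, hYe, hηnd⟩ := key_unit p hprime t ((pr t d).1 - 1) ((pr t d).2)
    e0 he02 (by linear_combination pr_norm t d) hdxZ hdyZ hY0
  obtain ⟨ε, rfl⟩ : ∃ ε, e = ε + 2 := ⟨e - 2, by omega⟩
  have hηn : (p:ℝ)^(-(2:ℤ)) < ‖(η:ℚ_[p])‖ := by
    by_contra hcon
    push_neg at hcon
    apply hηnd
    have := (Padic.norm_int_le_pow_iff_dvd η 2).mp (by
      calc ‖(η:ℚ_[p])‖ ≤ (p:ℝ)^(-(2:ℤ)) := hcon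
        _ = (p:ℝ)^(-(2:ℕ):ℤ) := by norm_num)
    exact this
  -- choose M and m
  obtain ⟨M0, hM0⟩ := pow_unbounded_of_one_lt ((c1+1)/γd) hp1R
  have hM : (c1+1) * (p:ℝ)^(-(M0:ℤ)) < γd := by
    rw [div_lt_iff₀ hγdpos] at hM0
    rw [zpow_neg, ← div_eq_mul_inv, div_lt_iff₀ (zpow_pos hppos _)]
    calc c1 + 1 < (p:ℝ)^(M0:ℕ) * γd := hM0
      _ = γd * (p:ℝ)^((M0:ℕ):ℤ) := by rw [zpow_natCast]; ring
  set m : ℕ := (ε+2) + M0 with hmdef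
  -- choose q0 r0
  obtain ⟨q0, r0, hq0, hq0n, hs0small⟩ : ∃ q0 r0 : ℤ, q0 ≠ 0 ∧ ‖(q0:ℚ_[p])‖ = cβ ∧
      ‖(q0:ℚ_[p])*β - (r0:ℚ_[p])‖ ≤ (p:ℝ)^(-(m:ℤ)) := by
    by_cases hβ1 : ‖β‖ ≤ 1
    · obtain ⟨k, hk1, hk⟩ := nat_approx β hβ1 m
      refine ⟨1, (k:ℤ), one_ne_zero, ?_, ?_⟩
      · rw [hcβdef, if_pos hβ1]
        simp
      · have : ((1:ℤ):ℚ_[p])*β - ((k:ℤ):ℚ_[p]) = -(((k:ℕ):ℚ_[p]) - β) := by push_cast; ring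
        rw [this, norm_neg]
        exact hk
    · push_neg at hβ1
      have hβ0 : β ≠ 0 := by
        intro h0
        rw [h0, norm_zero] at hβ1
        linarith
      have hβinv : ‖β⁻¹‖ ≤ 1 := by
        rw [norm_inv]
        exact le_of_lt (inv_lt_one_of_one_lt₀ hβ1)
      obtain ⟨M2, hM2⟩ := pow_unbounded_of_one_lt ‖β‖ hp1R
      have hM2' : (p:ℝ)^(-(M2:ℤ)) < ‖β‖⁻¹ := by
        rw [zpow_neg, zpow_natCast]
        gcongr
      obtain ⟨k, hk1, hk⟩ := nat_approx β⁻¹ hβinv (m + M2)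
      have hknorm : ‖((k:ℕ):ℚ_[p])‖ = ‖β‖⁻¹ := by
        have hsplit : ((k:ℕ):ℚ_[p]) = β⁻¹ + (((k:ℕ):ℚ_[p]) - β⁻¹) := by ring
        rw [hsplit, add_small β⁻¹ _ ?_, norm_inv]
        calc ‖((k:ℕ):ℚ_[p]) - β⁻¹‖ ≤ (p:ℝ)^(-((m + M2 : ℕ):ℤ)) := hk
          _ ≤ (p:ℝ)^(-(M2:ℤ)) := zpow_le_zpow_right₀ hp1R.le (by push_cast; omega)
          _ < ‖β‖⁻¹ := hM2'
          _ = ‖β⁻¹‖ := (norm_inv β).symm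
      refine ⟨(k:ℤ), 1, ?_, ?_, ?_⟩
      · intro h0
        have : ((k:ℤ):ℚ_[p]) = 0 := by rw [h0]; simp
        rw [show ((k:ℤ):ℚ_[p]) = ((k:ℕ):ℚ_[p]) by push_cast; ring] at this
        rw [this, norm_zero] at hknorm
        have : (0:ℝ) < ‖β‖⁻¹ := inv_pos.mpr (lt_trans one_pos hβ1)
        linarith [hknorm]
      · rw [show ((k:ℤ):ℚ_[p]) = ((k:ℕ):ℚ_[p]) by push_cast; ring, hknorm, hcβdef,
          if_neg (not_le.mpr hβ1)]
      · have hfac : ((k:ℤ):ℚ_[p])*β - ((1:ℤ):ℚ_[p]) = β * (((k:ℕ):ℚ_[p]) - β⁻¹) := by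
          push_cast
          field_simp
        rw [hfac, norm_mul]
        calc ‖β‖ * ‖((k:ℕ):ℚ_[p]) - β⁻¹‖ ≤ ‖β‖ * (p:ℝ)^(-((m + M2:ℕ):ℤ)) := by
              apply mul_le_mul_of_nonneg_left hk (norm_nonneg β)
          _ = ‖β‖ * ((p:ℝ)^(-(M2:ℤ)) * (p:ℝ)^(-(m:ℤ))) := by
              rw [← zpow_add₀ (ne_of_gt hppos)]
              congr 1
              push_cast
              ring
          _ ≤ ‖β‖ * (‖β‖⁻¹ * (p:ℝ)^(-(m:ℤ))) := by
              apply mul_le_mul_of_nonneg_left ?_ (norm_nonneg β)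
              apply mul_le_mul_of_nonneg_right (le_of_lt hM2') (le_of_lt (zpow_pos hppos _))
          _ = (p:ℝ)^(-(m:ℤ)) := by
              field_simp

  -- sequences
  set Q : ℕ → ℤ := fun n => (qr x1 y1 a b c q0 r0 n).1 with hQdef
  set R : ℕ → ℤ := fun n => (qr x1 y1 a b c q0 r0 n).2 with hRdef
  set σp : ℕ → ℚ_[p] := fun n => ((Q n : ℤ) : ℚ_[p])*β - ((R n : ℤ) : ℚ_[p]) with hσpdef
  have hQ0 : Q 0 = q0 := rfl
  have hR0 : R 0 = r0 := rfl
  have hσrec : ∀ n, σp (n+2) = ((t:ℤ):ℚ_[p]) * σp (n+1) - σp n := by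
    intro n
    obtain ⟨h1, h2⟩ := qr_rec x1 y1 a b c q0 r0 hpell n
    have hcc1 := congrArg (fun z : ℤ => (z : ℚ_[p])) h1
    have hcc2 := congrArg (fun z : ℤ => (z : ℚ_[p])) h2
    show ((qr x1 y1 a b c q0 r0 (n+2)).1 : ℚ_[p])*β - ((qr x1 y1 a b c q0 r0 (n+2)).2 : ℚ_[p])
      = ((t:ℤ):ℚ_[p]) * (((qr x1 y1 a b c q0 r0 (n+1)).1 : ℚ_[p])*β
          - ((qr x1 y1 a b c q0 r0 (n+1)).2 : ℚ_[p]))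
        - (((qr x1 y1 a b c q0 r0 n).1 : ℚ_[p])*β - ((qr x1 y1 a b c q0 r0 n).2 : ℚ_[p]))
    rw [hcc1, hcc2, htdef]
    push_cast
    ring
  have hσp0small : ‖σp 0‖ ≤ (p:ℝ)^(-(m:ℤ)) := hs0small
  have hintβ : ∀ (u v : ℤ), ‖(u:ℚ_[p])*β - (v:ℚ_[p])‖ ≤ c1 := by
    intro u v
    have hsplit : (u:ℚ_[p])*β - (v:ℚ_[p]) = (u:ℚ_[p])*β + (-(v:ℚ_[p])) := by ring
    rw [hsplit]
    refine le_trans (Padic.nonarchimedean _ _) (max_le ?_ ?_)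
    · rw [norm_mul]
      calc ‖(u:ℚ_[p])‖ * ‖β‖ ≤ 1 * ‖β‖ :=
            mul_le_mul_of_nonneg_right (Padic.norm_int_le_one u) (norm_nonneg β)
        _ = ‖β‖ := one_mul _
        _ ≤ c1 := le_max_right _ _
    · rw [norm_neg]
      exact le_trans (Padic.norm_int_le_one v) hc11
  have hσc0 : ‖σp 0‖ ≤ c1 := hintβ (Q 0) (R 0)
  have hσc1 : ‖σp 1‖ ≤ c1 := hintβ (Q 1) (R 1)
  -- the derivative norm γ
  set γ : ℝ := ‖(ξ:ℚ_[p]) * σp 0 + (η:ℚ_[p]) * σp 1‖ with hγdef2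
  have hγnn : 0 ≤ γ := norm_nonneg _
  set W : ℚ_[p] := (ξ:ℚ_[p]) + (η:ℚ_[p])*(((x1 + b*y1 : ℤ):ℚ_[p]) + ((2*a*y1:ℤ):ℚ_[p])*β)
    with hWdef
  set mainT : ℚ_[p] := (-(((2*y1:ℤ):ℚ_[p]))*(q0:ℚ_[p])*F*(η:ℚ_[p])) with hmainTdef
  have hid : (ξ:ℚ_[p]) * σp 0 + (η:ℚ_[p]) * σp 1 = mainT + (σp 0) * W := by
    show (ξ:ℚ_[p]) * ((q0:ℚ_[p])*β - (r0:ℚ_[p]))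
        + (η:ℚ_[p]) * ((((x1 - b*y1)*q0 - 2*a*y1*r0 : ℤ):ℚ_[p])*β
            - (((2*c*y1*q0 + (x1 + b*y1)*r0 : ℤ)):ℚ_[p])) = _
    rw [hmainTdef, hWdef, hFdef]
    simp only [hσpdef]
    rw [hQ0, hR0]
    push_cast
    ring
  have hWb : ‖W‖ ≤ c1 := by
    rw [hWdef]
    refine le_trans (Padic.nonarchimedean _ _) (max_le ?_ ?_)
    · exact le_trans (Padic.norm_int_le_one ξ) hc11
    · rw [norm_mul]
      calc ‖(η:ℚ_[p])‖ * ‖((x1 + b*y1 : ℤ):ℚ_[p]) + ((2*a*y1:ℤ):ℚ_[p])*β‖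
          ≤ 1 * ‖((x1 + b*y1 : ℤ):ℚ_[p]) + ((2*a*y1:ℤ):ℚ_[p])*β‖ :=
            mul_le_mul_of_nonneg_right (Padic.norm_int_le_one η) (norm_nonneg _)
        _ = ‖((x1 + b*y1 : ℤ):ℚ_[p]) + ((2*a*y1:ℤ):ℚ_[p])*β‖ := one_mul _
        _ ≤ c1 := by
            refine le_trans (Padic.nonarchimedean _ _) (max_le ?_ ?_)
            · exact le_trans (Padic.norm_int_le_one _) hc11
            · rw [norm_mul]
              calc ‖((2*a*y1:ℤ):ℚ_[p])‖ * ‖β‖ ≤ 1 * ‖β‖ :=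
                    mul_le_mul_of_nonneg_right (Padic.norm_int_le_one _) (norm_nonneg β)
                _ = ‖β‖ := one_mul _
                _ ≤ c1 := le_max_right _ _
  have hmainn : ‖mainT‖ = ‖((2*y1:ℤ):ℚ_[p])‖ * cβ * ‖F‖ * ‖(η:ℚ_[p])‖ := by
    rw [hmainTdef, norm_mul, norm_mul, norm_mul, norm_neg, hq0n]
  have hγdmain : γd < ‖mainT‖ := by
    calc γd = (‖((2*y1:ℤ):ℚ_[p])‖ * cβ * ‖F‖) * ((p:ℝ)^(-(2:ℤ))) := by rw [hγddef]; ring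
      _ < (‖((2*y1:ℤ):ℚ_[p])‖ * cβ * ‖F‖) * ‖(η:ℚ_[p])‖ := by
          refine mul_lt_mul_of_pos_left hηn ?_
          exact mul_pos (mul_pos h2y1n hcβpos) hFn
      _ = ‖mainT‖ := by rw [hmainn]
  have hδsmall : ‖σp 0 * W‖ < ‖mainT‖ := by
    rw [norm_mul]
    calc ‖σp 0‖ * ‖W‖ ≤ (p:ℝ)^(-(m:ℤ)) * c1 := by
          refine mul_le_mul hσp0small hWb (norm_nonneg _) ?_
          exact le_of_lt (zpow_pos hppos _)
      _ ≤ (p:ℝ)^(-(M0:ℤ)) * c1 := by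
          refine mul_le_mul_of_nonneg_right ?_ (le_of_lt hc1pos)
          refine zpow_le_zpow_right₀ hp1R.le ?_
          rw [hmdef]
          push_cast
          omega
      _ < (p:ℝ)^(-(M0:ℤ)) * (c1+1) := by
          refine mul_lt_mul_of_pos_left (by linarith) (zpow_pos hppos _)
      _ < γd := by rw [mul_comm]; exact hM
      _ < ‖mainT‖ := hγdmain
  have hγmain : γ = ‖mainT‖ := by
    rw [hγdef2, hid]
    exact add_small mainT _ hδsmall
  have hγlb : γd < γ := by rw [hγmain]; exact hγdmain
  -- apply Newton
  have hx' : (pr t d).1 = 1 + (p:ℤ)^(ε+2)*ξ := by linear_combination hSe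
  have hbig : c1 * (p:ℝ)^(-(ε:ℤ)-1) < ‖(ξ:ℚ_[p]) * σp 0 + (η:ℚ_[p]) * σp 1‖ := by
    rw [← hγdef2]
    calc c1 * (p:ℝ)^(-(ε:ℤ)-1) ≤ c1 * (p:ℝ)^(1-(e0:ℤ)) := by
          refine mul_le_mul_of_nonneg_left ?_ (le_of_lt hc1pos)
          refine zpow_le_zpow_right₀ hp1R.le ?_
          omega
      _ < γd := he0big
      _ < γ := hγlb
  have hbase : ‖σp 0‖ ≤ (p:ℝ)^(-(ε:ℤ)-2) * ‖(ξ:ℚ_[p]) * σp 0 + (η:ℚ_[p]) * σp 1‖ := by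
    rw [← hγdef2]
    calc ‖σp 0‖ ≤ (p:ℝ)^(-(m:ℤ)) := hσp0small
      _ = (p:ℝ)^(-(ε:ℤ)-2) * (p:ℝ)^(-(M0:ℤ)) := by
          rw [← zpow_add₀ (ne_of_gt hppos)]
          congr 1
          rw [hmdef]
          push_cast
          ring
      _ ≤ (p:ℝ)^(-(ε:ℤ)-2) * γd := by
          refine mul_le_mul_of_nonneg_left ?_ (le_of_lt (zpow_pos hppos _))
          calc (p:ℝ)^(-(M0:ℤ)) ≤ (c1+1) * (p:ℝ)^(-(M0:ℤ)) := by
                refine le_mul_of_one_le_left (le_of_lt (zpow_pos hppos _)) (by linarith)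
            _ ≤ γd := le_of_lt hM
      _ ≤ (p:ℝ)^(-(ε:ℤ)-2) * γ := by
          refine mul_le_mul_of_nonneg_left (le_of_lt hγlb) (le_of_lt (zpow_pos hppos _))
  have hnewt := newton t σp hσrec d ε hd1 ξ η hx' hYe c1 hσc0 hσc1 hbig hbase
  -- real side
  set α' : ℝ := (-(b:ℝ) - (a:ℝ)*α)/(a:ℝ) with hα'def
  have hkey2 : (a:ℝ)*α' = -(b:ℝ) - (a:ℝ)*α := by
    rw [hα'def]
    field_simp
  have hα'eq : (a:ℝ)*α'^2 + (b:ℝ)*α' + (c:ℝ) = 0 := by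
    have h2 : (a:ℝ)*((a:ℝ)*α'^2 + (b:ℝ)*α' + (c:ℝ)) = 0 := by
      linear_combination ((a:ℝ)*α' - (a:ℝ)*α)*hkey2 + (a:ℝ)*hαeq
    rcases mul_eq_zero.mp h2 with h | h
    · exact absurd h haR
    · exact h
  have h2a' : 2*(a:ℝ)*α' + (b:ℝ) = -sD := by
    rw [hsDdef]
    linear_combination 2*hkey2
  have hUfac : ∀ n, ((Q (n+1) : ℝ)*α - (R (n+1) : ℝ)) = U * ((Q n:ℝ)*α - (R n:ℝ)) := by
    intro n
    have h := sigma_step x1 y1 a b c q0 r0 α hαeq n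
    rw [show (x1:ℝ) + (y1:ℝ)*(2*(a:ℝ)*α + (b:ℝ)) = U from by rw [hUdef, hsDdef]] at h
    exact h
  have hU'fac : ∀ n, ((Q (n+1) : ℝ)*α' - (R (n+1) : ℝ)) = U' * ((Q n:ℝ)*α' - (R n:ℝ)) := by
    intro n
    have h := sigma_step x1 y1 a b c q0 r0 α' hα'eq n
    rw [h2a', show (x1:ℝ) + (y1:ℝ)*(-sD) = U' from by rw [hU'def]; ring] at h
    exact h
  set σ0 : ℝ := (q0:ℝ)*α - (r0:ℝ) with hσ0def
  set σ0' : ℝ := (q0:ℝ)*α' - (r0:ℝ) with hσ0'def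
  have hσU : ∀ n, ((Q n:ℝ)*α - (R n:ℝ)) = U^n * σ0 := by
    intro n
    induction n with
    | zero => rw [hQ0, hR0, pow_zero, one_mul, hσ0def]
    | succ n ih => rw [hUfac n, ih, pow_succ]; ring
  have hσ'U : ∀ n, ((Q n:ℝ)*α' - (R n:ℝ)) = U'^n * σ0' := by
    intro n
    induction n with
    | zero => rw [hQ0, hR0, pow_zero, one_mul, hσ0'def]
    | succ n ih => rw [hU'fac n, ih, pow_succ]; ring
  have hσ0'ne : σ0' ≠ 0 := by
    intro h0
    rw [hσ0'def] at h0
    apply irr (a*q0) (-q0*b - a*r0) (mul_ne_zero ha0 hq0)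
    push_cast
    linear_combination (q0:ℝ)*hkey2 - (a:ℝ)*h0
  have hαα' : α - α' ≠ 0 := by
    intro h0
    apply hsD0
    rw [hsDdef]
    linear_combination (a:ℝ)*h0 + hkey2
  have hA : 0 < |α - α'| := abs_pos.mpr hαα'
  set S1 : ℝ := |σ0| + |σ0'| with hS1def
  set S2 : ℝ := |α'| * |σ0| + |α| * |σ0'| with hS2def
  set SS : ℝ := max S1 S2 with hSSdef
  have hS1nn : 0 ≤ S1 := by rw [hS1def]; positivity
  have hSSnn : 0 ≤ SS := le_trans hS1nn (le_max_left _ _)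
  have habsUle : |U| ≤ |U'| := le_trans habsU.le habsU'.le
  have hQb : ∀ n, |(Q n : ℝ)| * |α - α'| ≤ |U'|^n * S1 := by
    intro n
    have hQeq : (Q n : ℝ) * (α - α') = U^n*σ0 - U'^n*σ0' := by
      linear_combination (hσU n) - (hσ'U n)
    rw [← abs_mul, hQeq]
    have htri : |U^n*σ0 - U'^n*σ0'| ≤ |U^n*σ0| + |U'^n*σ0'| := by
      calc |U^n*σ0 - U'^n*σ0'| = |U^n*σ0 + (-(U'^n*σ0'))| := by ring_nf
        _ ≤ |U^n*σ0| + |(-(U'^n*σ0'))| := abs_add_le _ _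
        _ = |U^n*σ0| + |U'^n*σ0'| := by rw [abs_neg]
    refine le_trans htri ?_
    rw [abs_mul, abs_mul, abs_pow, abs_pow, hS1def]
    have h1 : |U|^n ≤ |U'|^n := pow_le_pow_left₀ (abs_nonneg U) habsUle n
    have h3 : |U|^n * |σ0| ≤ |U'|^n * |σ0| := mul_le_mul_of_nonneg_right h1 (abs_nonneg _)
    have expand : |U'|^n * (|σ0| + |σ0'|) = |U'|^n * |σ0| + |U'|^n * |σ0'| := by ring
    rw [expand]
    linarith
  have hRb : ∀ n, |(R n : ℝ)| * |α - α'| ≤ |U'|^n * S2 := by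
    intro n
    have hReq : (R n : ℝ) * (α - α') = α'*(U^n*σ0) - α*(U'^n*σ0') := by
      linear_combination (α':ℝ)*(hσU n) - α*(hσ'U n)
    rw [← abs_mul, hReq]
    have htri : |α'*(U^n*σ0) - α*(U'^n*σ0')| ≤ |α'| * (|U|^n * |σ0|) + |α| * (|U'|^n * |σ0'|) := by
      calc |α'*(U^n*σ0) - α*(U'^n*σ0')| = |α'*(U^n*σ0) + (-(α*(U'^n*σ0')))| := by ring_nf
        _ ≤ |α'*(U^n*σ0)| + |(-(α*(U'^n*σ0')))| := abs_add_le _ _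
        _ = |α'| * (|U|^n * |σ0|) + |α| * (|U'|^n * |σ0'|) := by
            rw [abs_neg, abs_mul, abs_mul, abs_mul, abs_mul, abs_pow, abs_pow]
    refine le_trans htri ?_
    rw [hS2def]
    have h1 : |U|^n ≤ |U'|^n := pow_le_pow_left₀ (abs_nonneg U) habsUle n
    have h3 : |α'| * (|U|^n * |σ0|) ≤ |α'| * (|U'|^n * |σ0|) :=
      mul_le_mul_of_nonneg_left (mul_le_mul_of_nonneg_right h1 (abs_nonneg _)) (abs_nonneg _)
    have expand : |U'|^n * (|α'| * |σ0| + |α| * |σ0'|)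
        = |α'| * (|U'|^n * |σ0|) + |α| * (|U'|^n * |σ0'|) := by ring
    rw [expand]
    linarith
  set Creal : ℝ := SS * |σ0| / |α-α'| with hCrealdef
  have hCrealnn : 0 ≤ Creal := by
    rw [hCrealdef]
    exact div_nonneg (mul_nonneg hSSnn (abs_nonneg _)) (abs_nonneg _)
  have hrealb : ∀ n, max |(Q n:ℝ)| |(R n:ℝ)| * |(Q n:ℝ)*α - (R n:ℝ)| ≤ Creal := by
    intro n
    have hmx : max |(Q n:ℝ)| |(R n:ℝ)| * |α - α'| ≤ |U'|^n * SS := by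
      rw [max_mul_of_nonneg _ _ (le_of_lt hA)]
      refine max_le ?_ ?_
      · exact le_trans (hQb n) (mul_le_mul_of_nonneg_left (le_max_left _ _)
          (pow_nonneg (abs_nonneg _) n))
      · exact le_trans (hRb n) (mul_le_mul_of_nonneg_left (le_max_right _ _)
          (pow_nonneg (abs_nonneg _) n))
    have hσabs : |(Q n:ℝ)*α - (R n:ℝ)| = |U|^n * |σ0| := by
      rw [hσU n, abs_mul, abs_pow]
    rw [hσabs]
    have h4 : max |(Q n:ℝ)| |(R n:ℝ)| ≤ |U'|^n * SS / |α-α'| := (le_div_iff₀ hA).mpr hmx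
    calc max |(Q n:ℝ)| |(R n:ℝ)| * (|U|^n * |σ0|)
        ≤ (|U'|^n * SS / |α-α'|) * (|U|^n * |σ0|) := by
          refine mul_le_mul_of_nonneg_right h4 ?_
          positivity
      _ = (SS * |σ0| / |α-α'|) * (|U| * |U'|)^n := by rw [mul_pow]; ring
      _ = Creal := by rw [habsUU', one_pow, mul_one, hCrealdef]
  -- nonvanishing of Q n, R n for large n
  have hσ0'pos : 0 < |σ0'| := abs_pos.mpr hσ0'ne
  have hαne0 : α ≠ 0 := by
    intro h0
    apply irr 1 0 one_ne_zero
    push_cast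
    rw [h0]
    ring
  have hαpos : 0 < |α| := abs_pos.mpr hαne0
  obtain ⟨N1, hN1⟩ := pow_unbounded_of_one_lt (|σ0| / |σ0'|) habsU'
  obtain ⟨N2, hN2⟩ := pow_unbounded_of_one_lt ((|α'| * |σ0|) / (|α| * |σ0'|)) habsU'
  have hQR0 : ∀ n, max N1 N2 ≤ n → Q n ≠ 0 ∧ R n ≠ 0 := by
    intro n hn
    have hm1 : |U'|^N1 ≤ |U'|^n :=
      pow_le_pow_right₀ habsU'.le (le_trans (le_max_left _ _) hn)
    have hm2 : |U'|^N2 ≤ |U'|^n :=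
      pow_le_pow_right₀ habsU'.le (le_trans (le_max_right _ _) hn)
    have hUn1 : |U|^n ≤ 1 := pow_le_one₀ (abs_nonneg U) habsU.le
    constructor
    · intro h0
      have h1 := hσU n
      have h2 := hσ'U n
      rw [h0] at h1 h2
      have h3 : U^n*σ0 = U'^n*σ0' := by
        push_cast at h1 h2
        linarith
      have h4 : |U|^n * |σ0| = |U'|^n * |σ0'| := by
        rw [← abs_pow, ← abs_mul, h3, abs_mul, abs_pow]
      have h5 : |U|^n * |σ0| ≤ |σ0| := by
        have := mul_le_mul_of_nonneg_right hUn1 (abs_nonneg σ0)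
        rwa [one_mul] at this
      have h6 : |σ0| < |U'|^n * |σ0'| := by
        rw [div_lt_iff₀ hσ0'pos] at hN1
        calc |σ0| < |U'|^N1 * |σ0'| := hN1
          _ ≤ |U'|^n * |σ0'| := mul_le_mul_of_nonneg_right hm1 (abs_nonneg _)
      linarith
    · intro h0
      have h1 := hσU n
      have h2 := hσ'U n
      rw [h0] at h1 h2
      have h3 : α'*(U^n*σ0) - α*(U'^n*σ0') = 0 := by
        push_cast at h1 h2
        linear_combination α*h2 - (α':ℝ)*h1
      have h4 : |α'| * (|U|^n * |σ0|) = |α| * (|U'|^n * |σ0'|) := by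
        have h3' : α'*(U^n*σ0) = α*(U'^n*σ0') := by linarith
        calc |α'| * (|U|^n * |σ0|) = |α'*(U^n*σ0)| := by
              rw [abs_mul, abs_mul, abs_pow]
          _ = |α*(U'^n*σ0')| := by rw [h3']
          _ = |α| * (|U'|^n * |σ0'|) := by rw [abs_mul, abs_mul, abs_pow]
      have h5 : |α'| * (|U|^n * |σ0|) ≤ |α'| * |σ0| := by
        refine mul_le_mul_of_nonneg_left ?_ (abs_nonneg _)
        have := mul_le_mul_of_nonneg_right hUn1 (abs_nonneg σ0)
        rwa [one_mul] at this
      have h6 : |α'| * |σ0| < |α| * (|U'|^n * |σ0'|) := by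
        rw [div_lt_iff₀ (mul_pos hαpos hσ0'pos)] at hN2
        calc |α'| * |σ0| < |U'|^N2 * (|α| * |σ0'|) := hN2
          _ ≤ |U'|^n * (|α| * |σ0'|) := mul_le_mul_of_nonneg_right hm2
              (mul_nonneg (abs_nonneg _) (abs_nonneg _))
          _ = |α| * (|U'|^n * |σ0'|) := by ring
      linarith
  -- conclusion
  have hmem : ∀ n, Q n ≠ 0 → R n ≠ 0 →
      (max |(Q n:ℝ)| |(R n:ℝ)| * |(Q n:ℝ)*α - (R n:ℝ)| * ‖σp n‖) ∈ Sset :=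
    fun n hq hr => ⟨Q n, R n, hq, hr, rfl⟩
  have hSne : Sset.Nonempty := ⟨_, 1, 1, one_ne_zero, one_ne_zero, rfl⟩
  have hSnn : ∀ x ∈ Sset, 0 ≤ x := by
    rintro x ⟨q, r, hq, hr, rfl⟩
    positivity
  have hbdd : BddBelow Sset := ⟨0, fun x hx => hSnn x hx⟩
  have hγpos : 0 < γ := lt_trans hγdpos hγlb
  have hkey3 : ∀ εr : ℝ, 0 < εr → ∃ x ∈ Sset, x < εr := by
    intro εr hεr
    obtain ⟨N3, hN3⟩ := pow_unbounded_of_one_lt ((Creal*γ+1)/εr) hp1R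
    set j : ℕ := max (max N1 N2) N3 with hjdef
    obtain ⟨n, hdn, hjn, hsmall⟩ := hnewt j
    rw [← hγdef2] at hsmall
    have hQRn := hQR0 n (le_trans (le_max_left _ _) hjn)
    refine ⟨_, hmem n hQRn.1 hQRn.2, ?_⟩
    have hNj : (p:ℝ)^(N3:ℕ) ≤ (p:ℝ)^(j:ℕ) :=
      pow_le_pow_right₀ hp1R.le (le_max_right (max N1 N2) N3)
    calc max |(Q n:ℝ)| |(R n:ℝ)| * |(Q n:ℝ)*α - (R n:ℝ)| * ‖σp n‖
        ≤ Creal * ‖σp n‖ := mul_le_mul_of_nonneg_right (hrealb n) (norm_nonneg _)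
      _ ≤ Creal * ((p:ℝ)^(-(ε:ℤ)-2-(j:ℤ)) * γ) := mul_le_mul_of_nonneg_left hsmall hCrealnn
      _ = (Creal * γ) * (p:ℝ)^(-(ε:ℤ)-2-(j:ℤ)) := by ring
      _ ≤ (Creal * γ) * (p:ℝ)^(-(j:ℤ)) := by
          refine mul_le_mul_of_nonneg_left ?_ (mul_nonneg hCrealnn hγnn)
          refine zpow_le_zpow_right₀ hp1R.le ?_
          omega
      _ ≤ (Creal * γ + 1) * (p:ℝ)^(-(j:ℤ)) := by
          refine mul_le_mul_of_nonneg_right ?_ (le_of_lt (zpow_pos hppos _))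
          linarith
      _ < εr := by
          rw [div_lt_iff₀ hεr] at hN3
          rw [zpow_neg, ← div_eq_mul_inv, div_lt_iff₀ (zpow_pos hppos _)]
          calc Creal * γ + 1 < εr * (p:ℝ)^(N3:ℕ) := by linarith [hN3]
            _ ≤ εr * (p:ℝ)^(j:ℕ) := mul_le_mul_of_nonneg_left hNj (le_of_lt hεr)
            _ = εr * (p:ℝ)^((j:ℕ):ℤ) := by rw [zpow_natCast]
  have hge : 0 ≤ sInf Sset := Real.sInf_nonneg hSnn
  by_contra hne
  have hpos : 0 < sInf Sset := lt_of_le_of_ne hge (Ne.symm hne)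
  obtain ⟨x, hxS, hxlt⟩ := hkey3 (sInf Sset) hpos
  exact absurd (csInf_le hbdd hxS) (not_le.mpr hxlt)
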